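/- For the Lennard-Jones potential V₀(r) = r^{−12} − 2r^{−6} on the triangular lattice with nearest-neighbor interactions, the uniformly dilated lattice M(t) = tM is stable (λ_atom(M(t)) > 0, equivalently λ̃_LH(M(t)) > 0) if and only if t ∈ (0, (19/10)^{1/6}). -/

import Mathlib

open Real

noncomputable section

/-- `𝓡 = {±e₁, ±e₂, ±(e₂−e₁)}`. -/
def triR : Finset (Fin 2 → ℤ) :=
  {![1, 0], ![-1, 0], ![0, 1], ![0, -1], ![-1, 1], ![1, -1]}

/-- The lattice basis matrix `M` of the triangular lattice. -/
def triM : Matrix (Fin 2) (Fin 2) ℝ :=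
  !![1, 1/2; 0, Real.sqrt 3 / 2]

/-- `Mρ ∈ ℝ²`. -/
def triMvec (ρ : Fin 2 → ℤ) : Fin 2 → ℝ :=
  triM.mulVec (fun i => (ρ i : ℝ))

/-- `K(t)` for pair interactions, with `a = V₀'(t)/t`, `b = V₀''(t)`. -/
def triK (a b : ℝ) : Fin 2 → ↥triR → Fin 2 → ↥triR → ℝ :=
  fun j ρ l σ =>
    if ρ = σ then
      a * ((if j = l then 1 else 0) - triMvec ρ.1 j * triMvec ρ.1 l) +
        b * (triMvec ρ.1 j * triMvec ρ.1 l)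
    else 0

/-- `ρ·k`. -/
def ipk (ρ : Fin 2 → ℤ) (k : Fin 2 → ℝ) : ℝ :=
  ∑ i, (ρ i : ℝ) * k i

/-- `K[ξ⊗v, ξ⊗v]`. -/
def Qform (K : Fin 2 → ↥triR → Fin 2 → ↥triR → ℝ) (ξ : Fin 2 → ℝ)
    (v : ↥triR → ℝ) : ℝ :=
  ∑ j, ∑ l, ∑ ρ : ↥triR, ∑ σ : ↥triR, K j ρ l σ * (ξ j * v ρ) * (ξ l * v σ)

/-- The atomistic stability constant (cosine/sine representation). -/
def lamAtomCS (K : Fin 2 → ↥triR → Fin 2 → ↥triR → ℝ) : ℝ :=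
  sInf { r : ℝ | ∃ (ξ k : Fin 2 → ℝ), ξ ≠ 0 ∧ k ≠ 0 ∧
    (∀ i, k i ∈ Set.Ico 0 (2 * π)) ∧
    r = (Qform K ξ (fun ρ => Real.cos (ipk ρ.1 k) - 1) +
          Qform K ξ (fun ρ => Real.sin (ipk ρ.1 k))) /
        ((∑ i, (ξ i) ^ 2) *
          ((∑ ρ : ↥triR, (Real.cos (ipk ρ.1 k) - 1) ^ 2) +
            (∑ ρ : ↥triR, (Real.sin (ipk ρ.1 k)) ^ 2))) }

/-- The modified Legendre–Hadamard constant `λ̃_LH`. -/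
def lamTildeLH (K : Fin 2 → ↥triR → Fin 2 → ↥triR → ℝ) : ℝ :=
  sInf { r : ℝ | ∃ ξ η : Fin 2 → ℝ, ξ ≠ 0 ∧ η ≠ 0 ∧
    r = Qform K ξ (fun ρ => ipk ρ.1 η) /
        ((∑ i, (ξ i) ^ 2) * (∑ ρ : ↥triR, (ipk ρ.1 η) ^ 2)) }

/-- The Lennard-Jones potential `V₀(r) = r⁻¹² − 2r⁻⁶`. -/
def lj : ℝ → ℝ := fun r => r ^ (-12 : ℤ) - 2 * r ^ (-6 : ℤ)

/-! ### Auxiliary lemmas -/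

lemma sqrt3_sq : Real.sqrt 3 ^ 2 = 3 := Real.sq_sqrt (by norm_num)

lemma coreL (w1 w2 w3 x0 x1 : ℝ) (h1 : 0 ≤ w1) (h2 : 0 ≤ w2) (h3 : 0 ≤ w3)
    (hH : w1^2 + w2^2 + w3^2 ≤ 2*(w1*w2 + w2*w3 + w3*w1)) :
    0 ≤ w1*(3*x0^2 - x1^2) + w2*(2*x1^2 + 2*Real.sqrt 3*x0*x1)
      + w3*(2*x1^2 - 2*Real.sqrt 3*x0*x1) := by
  have hs := sqrt3_sq
  rcases eq_or_lt_of_le h1 with h0 | h0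
  · have h23 : w2 = w3 := by nlinarith [sq_nonneg (w2 - w3)]
    rw [← h0, h23]
    nlinarith [mul_nonneg h3 (sq_nonneg x1)]
  · have key : 3*w1*(w1*(3*x0^2 - x1^2) + w2*(2*x1^2 + 2*Real.sqrt 3*x0*x1)
        + w3*(2*x1^2 - 2*Real.sqrt 3*x0*x1))
        = (3*w1*x0 + Real.sqrt 3*(w2 - w3)*x1)^2
          + 3*(2*(w1*w2 + w2*w3 + w3*w1) - (w1^2 + w2^2 + w3^2))*x1^2 := by
      linear_combination (-(w2 - w3)^2*x1^2) * sqrt3_sq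
    nlinarith [sq_nonneg (3*w1*x0 + Real.sqrt 3*(w2 - w3)*x1),
      mul_nonneg (by linarith : (0:ℝ) ≤ 2*(w1*w2 + w2*w3 + w3*w1) - (w1^2 + w2^2 + w3^2))
        (sq_nonneg x1)]

lemma coreU (w1 w2 w3 x0 x1 : ℝ) (h1 : 0 ≤ w1) (h2 : 0 ≤ w2) (h3 : 0 ≤ w3)
    (hH : w1^2 + w2^2 + w3^2 ≤ 2*(w1*w2 + w2*w3 + w3*w1)) :
    0 ≤ w1*(3*x1^2 - x0^2) + w2*(2*x0^2 - 2*Real.sqrt 3*x0*x1)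
      + w3*(2*x0^2 + 2*Real.sqrt 3*x0*x1) := by
  have h := coreL w1 w3 w2 x1 x0 h1 h3 h2 (by nlinarith)
  nlinarith [h]

/-- The numerator of the Rayleigh-type quotients. -/
def NN (a b w1 w2 w3 x0 x1 : ℝ) : ℝ :=
  w1*(a*(x0^2+x1^2) + (b-a)*x0^2)
  + w2*(a*(x0^2+x1^2) + (b-a)*(x0/2 + Real.sqrt 3/2*x1)^2)
  + w3*(a*(x0^2+x1^2) + (b-a)*(-x0/2 + Real.sqrt 3/2*x1)^2)

lemma ratio_min_le (a b w1 w2 w3 x0 x1 : ℝ) (h1 : 0 ≤ w1) (h2 : 0 ≤ w2) (h3 : 0 ≤ w3)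
    (hH : w1^2 + w2^2 + w3^2 ≤ 2*(w1*w2 + w2*w3 + w3*w1))
    (hP : 0 < x0^2 + x1^2) (hw : 0 < w1 + w2 + w3) :
    min ((3*a+b)/4) ((a+3*b)/4)
      ≤ NN a b w1 w2 w3 x0 x1 / ((x0^2+x1^2)*(w1+w2+w3)) := by
  rw [le_div_iff₀ (by positivity)]
  have hL := coreL w1 w2 w3 x0 x1 h1 h2 h3 hH
  have hU := coreU w1 w2 w3 x0 x1 h1 h2 h3 hH
  rcases le_total a b with hab | hab
  · have e1 : 4*NN a b w1 w2 w3 x0 x1 - (3*a+b)*((x0^2+x1^2)*(w1+w2+w3))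
        = (b-a)*(w1*(3*x0^2 - x1^2) + w2*(2*x1^2 + 2*Real.sqrt 3*x0*x1)
          + w3*(2*x1^2 - 2*Real.sqrt 3*x0*x1)) := by
      unfold NN
      linear_combination ((b-a)*(w2+w3)*x1^2) * sqrt3_sq
    have h5 : min ((3*a+b)/4) ((a+3*b)/4) ≤ (3*a+b)/4 := min_le_left _ _
    nlinarith [mul_nonneg (sub_nonneg.2 hab) hL,
      mul_le_mul_of_nonneg_right h5
        (le_of_lt (by positivity : (0:ℝ) < (x0^2+x1^2)*(w1+w2+w3)))]
  · have e2 : 4*NN a b w1 w2 w3 x0 x1 - (a+3*b)*((x0^2+x1^2)*(w1+w2+w3))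
        = (a-b)*(w1*(3*x1^2 - x0^2) + w2*(2*x0^2 - 2*Real.sqrt 3*x0*x1)
          + w3*(2*x0^2 + 2*Real.sqrt 3*x0*x1)) := by
      unfold NN
      linear_combination (-(a-b)*(w2+w3)*x1^2) * sqrt3_sq
    have h5 : min ((3*a+b)/4) ((a+3*b)/4) ≤ (a+3*b)/4 := min_le_right _ _
    nlinarith [mul_nonneg (sub_nonneg.2 hab) hU,
      mul_le_mul_of_nonneg_right h5
        (le_of_lt (by positivity : (0:ℝ) < (x0^2+x1^2)*(w1+w2+w3)))]

lemma ratio_lb (a b w1 w2 w3 x0 x1 : ℝ) (h1 : 0 ≤ w1) (h2 : 0 ≤ w2) (h3 : 0 ≤ w3)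
    (hP : 0 < x0^2 + x1^2) (hw : 0 < w1 + w2 + w3) :
    min a b ≤ NN a b w1 w2 w3 x0 x1 / ((x0^2+x1^2)*(w1+w2+w3)) := by
  rw [le_div_iff₀ (by positivity)]
  have hs := sqrt3_sq
  rcases le_total a b with hab | hab
  · have h5 : min a b ≤ a := min_le_left _ _
    unfold NN
    nlinarith [mul_nonneg (mul_nonneg (sub_nonneg.2 hab) h1) (sq_nonneg x0),
      mul_nonneg (mul_nonneg (sub_nonneg.2 hab) h2) (sq_nonneg (x0/2 + Real.sqrt 3/2*x1)),
      mul_nonneg (mul_nonneg (sub_nonneg.2 hab) h3) (sq_nonneg (-x0/2 + Real.sqrt 3/2*x1)),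
      mul_le_mul_of_nonneg_right h5
        (le_of_lt (by positivity : (0:ℝ) < (x0^2+x1^2)*(w1+w2+w3)))]
  · have h5 : min a b ≤ b := min_le_right _ _
    have e : NN a b w1 w2 w3 x0 x1 - b*((x0^2+x1^2)*(w1+w2+w3))
        = (a-b)*(w1*x1^2 + w2*((Real.sqrt 3*x0 - x1)/2)^2 + w3*((Real.sqrt 3*x0 + x1)/2)^2) := by
      unfold NN
      linear_combination (-(a-b)*(w2+w3)*(x0^2+x1^2)/4) * sqrt3_sq
    nlinarith [e, mul_nonneg (mul_nonneg (sub_nonneg.2 hab) h1) (sq_nonneg x1),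
      mul_nonneg (mul_nonneg (sub_nonneg.2 hab) h2) (sq_nonneg ((Real.sqrt 3*x0 - x1)/2)),
      mul_nonneg (mul_nonneg (sub_nonneg.2 hab) h3) (sq_nonneg ((Real.sqrt 3*x0 + x1)/2)),
      mul_le_mul_of_nonneg_right h5
        (le_of_lt (by positivity : (0:ℝ) < (x0^2+x1^2)*(w1+w2+w3)))]

lemma heron_trig (x y : ℝ) :
    (2-2*Real.cos x)^2 + (2-2*Real.cos y)^2 + (2-2*Real.cos (y-x))^2
    ≤ 2*((2-2*Real.cos x)*(2-2*Real.cos y) + (2-2*Real.cos y)*(2-2*Real.cos (y-x))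
        + (2-2*Real.cos (y-x))*(2-2*Real.cos x)) := by
  have hx := sin_sq_add_cos_sq x
  have hy := sin_sq_add_cos_sq y
  rw [Real.cos_sub]
  nlinarith [sq_nonneg (Real.sin y * (1 - Real.cos x) - Real.sin x * (1 - Real.cos y)), hx, hy,
    sq_nonneg (Real.sin x), sq_nonneg (Real.sin y)]

lemma sum_triR (f : (Fin 2 → ℤ) → ℝ) :
    ∑ ρ : ↥triR, f ρ.1 =
      f ![1,0] + f ![-1,0] + f ![0,1] + f ![0,-1] + f ![-1,1] + f ![1,-1] := by
  rw [Finset.sum_coe_sort triR f]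
  show ∑ x ∈ ({![1, 0], ![-1, 0], ![0, 1], ![0, -1], ![-1, 1], ![1, -1]} :
      Finset (Fin 2 → ℤ)), f x = _
  rw [Finset.sum_insert (by decide), Finset.sum_insert (by decide),
    Finset.sum_insert (by decide), Finset.sum_insert (by decide),
    Finset.sum_insert (by decide), Finset.sum_singleton]
  ring

lemma Qform_eq (a b : ℝ) (ξ : Fin 2 → ℝ) (v : ↥triR → ℝ) :
    Qform (triK a b) ξ v =
      ∑ ρ : ↥triR, (v ρ)^2 *
        (a * (ξ 0^2 + ξ 1^2) +
          (b - a) * (ξ 0 * triMvec ρ.1 0 + ξ 1 * triMvec ρ.1 1)^2) := by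
  unfold Qform triK
  simp only [ite_mul, zero_mul, Finset.sum_ite_eq, Finset.mem_univ, if_true]
  simp only [Fin.sum_univ_two]
  rw [← Finset.sum_add_distrib, ← Finset.sum_add_distrib, ← Finset.sum_add_distrib]
  refine Finset.sum_congr rfl fun ρ _ => ?_
  norm_num
  ring

lemma mv0 : (triMvec ![1,0] 0 = 1 ∧ triMvec ![1,0] 1 = 0)
    ∧ (triMvec ![-1,0] 0 = -1 ∧ triMvec ![-1,0] 1 = 0)
    ∧ (triMvec ![0,1] 0 = 1/2 ∧ triMvec ![0,1] 1 = Real.sqrt 3/2)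
    ∧ (triMvec ![0,-1] 0 = -(1/2) ∧ triMvec ![0,-1] 1 = -(Real.sqrt 3/2))
    ∧ (triMvec ![-1,1] 0 = -(1/2) ∧ triMvec ![-1,1] 1 = Real.sqrt 3/2)
    ∧ (triMvec ![1,-1] 0 = 1/2 ∧ triMvec ![1,-1] 1 = -(Real.sqrt 3/2)) := by
  refine ⟨⟨?_,?_⟩,⟨?_,?_⟩,⟨?_,?_⟩,⟨?_,?_⟩,⟨?_,?_⟩,⟨?_,?_⟩⟩ <;>
    · simp [triMvec, triM, Matrix.mulVec, dotProduct, Fin.sum_univ_two]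
      try ring

lemma Qform_explicit (a b : ℝ) (ξ : Fin 2 → ℝ) (F : (Fin 2 → ℤ) → ℝ) :
    Qform (triK a b) ξ (fun ρ => F ρ.1) =
      ((F ![1,0])^2 + (F ![-1,0])^2) * (a*(ξ 0^2 + ξ 1^2) + (b-a)*(ξ 0)^2)
      + ((F ![0,1])^2 + (F ![0,-1])^2) *
          (a*(ξ 0^2 + ξ 1^2) + (b-a)*(ξ 0/2 + Real.sqrt 3/2 * ξ 1)^2)
      + ((F ![-1,1])^2 + (F ![1,-1])^2) *
          (a*(ξ 0^2 + ξ 1^2) + (b-a)*(-(ξ 0)/2 + Real.sqrt 3/2 * ξ 1)^2) := by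
  rw [Qform_eq]
  rw [sum_triR (fun x => (F x)^2 *
      (a * (ξ 0^2 + ξ 1^2) + (b - a) * (ξ 0 * triMvec x 0 + ξ 1 * triMvec x 1)^2))]
  obtain ⟨⟨a1,a2⟩,⟨b1,b2⟩,⟨c1,c2⟩,⟨d1,d2⟩,⟨e1,e2⟩,⟨f1,f2⟩⟩ := mv0
  rw [a1,a2,b1,b2,c1,c2,d1,d2,e1,e2,f1,f2]
  ring

lemma ipk_vals (k : Fin 2 → ℝ) :
    ipk ![1,0] k = k 0 ∧ ipk ![-1,0] k = -(k 0) ∧ ipk ![0,1] k = k 1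
    ∧ ipk ![0,-1] k = -(k 1) ∧ ipk ![-1,1] k = k 1 - k 0
    ∧ ipk ![1,-1] k = -(k 1 - k 0) := by
  refine ⟨?_,?_,?_,?_,?_,?_⟩ <;> · simp [ipk, Fin.sum_univ_two]; try ring

lemma atom_elem_eq (a b : ℝ) (ξ k : Fin 2 → ℝ) :
    (Qform (triK a b) ξ (fun ρ => Real.cos (ipk ρ.1 k) - 1) +
      Qform (triK a b) ξ (fun ρ => Real.sin (ipk ρ.1 k))) /
    ((∑ i, (ξ i) ^ 2) *
      ((∑ ρ : ↥triR, (Real.cos (ipk ρ.1 k) - 1) ^ 2) +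
        (∑ ρ : ↥triR, (Real.sin (ipk ρ.1 k)) ^ 2)))
    = NN a b (2-2*Real.cos (k 0)) (2-2*Real.cos (k 1)) (2-2*Real.cos (k 1 - k 0)) (ξ 0) (ξ 1) /
      (((ξ 0)^2+(ξ 1)^2) *
        ((2-2*Real.cos (k 0)) + (2-2*Real.cos (k 1)) + (2-2*Real.cos (k 1 - k 0)))) := by
  obtain ⟨i1,i2,i3,i4,i5,i6⟩ := ipk_vals k
  have p1 := sin_sq_add_cos_sq (k 0)
  have p2 := sin_sq_add_cos_sq (k 1)
  have p3 := sin_sq_add_cos_sq (k 1 - k 0)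
  have hnum : (Qform (triK a b) ξ (fun ρ => Real.cos (ipk ρ.1 k) - 1) +
      Qform (triK a b) ξ (fun ρ => Real.sin (ipk ρ.1 k)))
      = 2 * NN a b (2-2*Real.cos (k 0)) (2-2*Real.cos (k 1)) (2-2*Real.cos (k 1 - k 0))
          (ξ 0) (ξ 1) := by
    rw [Qform_explicit a b ξ (fun x => Real.cos (ipk x k) - 1),
      Qform_explicit a b ξ (fun x => Real.sin (ipk x k))]
    simp only [i1, i2, i3, i4, i5, i6, Real.cos_neg, Real.sin_neg]
    unfold NN
    linear_combination (2*(a*((ξ 0)^2+(ξ 1)^2)+(b-a)*(ξ 0)^2))*p1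
      + (2*(a*((ξ 0)^2+(ξ 1)^2)+(b-a)*(ξ 0/2+Real.sqrt 3/2*ξ 1)^2))*p2
      + (2*(a*((ξ 0)^2+(ξ 1)^2)+(b-a)*(-(ξ 0)/2+Real.sqrt 3/2*ξ 1)^2))*p3
  have hden : ((∑ i, (ξ i) ^ 2) *
      ((∑ ρ : ↥triR, (Real.cos (ipk ρ.1 k) - 1) ^ 2) +
        (∑ ρ : ↥triR, (Real.sin (ipk ρ.1 k)) ^ 2)))
      = 2 * ((((ξ 0)^2+(ξ 1)^2)) *
        ((2-2*Real.cos (k 0)) + (2-2*Real.cos (k 1)) + (2-2*Real.cos (k 1 - k 0)))) := by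
    rw [Fin.sum_univ_two, sum_triR (fun x => (Real.cos (ipk x k) - 1)^2),
      sum_triR (fun x => (Real.sin (ipk x k))^2)]
    simp only [i1, i2, i3, i4, i5, i6, Real.cos_neg, Real.sin_neg]
    linear_combination (2*((ξ 0)^2+(ξ 1)^2))*p1 + (2*((ξ 0)^2+(ξ 1)^2))*p2
      + (2*((ξ 0)^2+(ξ 1)^2))*p3
  rw [hnum, hden, mul_div_mul_left _ _ (two_ne_zero)]

lemma tilde_elem_eq (a b : ℝ) (ξ η : Fin 2 → ℝ) :
    Qform (triK a b) ξ (fun ρ => ipk ρ.1 η) /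
      ((∑ i, (ξ i) ^ 2) * (∑ ρ : ↥triR, (ipk ρ.1 η) ^ 2))
    = NN a b ((η 0)^2) ((η 1)^2) ((η 1 - η 0)^2) (ξ 0) (ξ 1) /
      (((ξ 0)^2+(ξ 1)^2) * ((η 0)^2 + (η 1)^2 + (η 1 - η 0)^2)) := by
  obtain ⟨i1,i2,i3,i4,i5,i6⟩ := ipk_vals η
  have hnum : Qform (triK a b) ξ (fun ρ => ipk ρ.1 η)
      = 2 * NN a b ((η 0)^2) ((η 1)^2) ((η 1 - η 0)^2) (ξ 0) (ξ 1) := by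
    rw [Qform_explicit a b ξ (fun x => ipk x η)]
    rw [i1, i2, i3, i4, i5, i6]
    unfold NN
    ring
  have hden : ((∑ i, (ξ i) ^ 2) * (∑ ρ : ↥triR, (ipk ρ.1 η) ^ 2))
      = 2 * ((((ξ 0)^2+(ξ 1)^2)) * ((η 0)^2 + (η 1)^2 + (η 1 - η 0)^2)) := by
    rw [Fin.sum_univ_two, sum_triR (fun x => (ipk x η)^2)]
    rw [i1, i2, i3, i4, i5, i6]
    ring
  rw [hnum, hden, mul_div_mul_left _ _ (two_ne_zero)]

lemma sumsq_pos {ξ : Fin 2 → ℝ} (h : ξ ≠ 0) : 0 < (ξ 0)^2 + (ξ 1)^2 := by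
  rcases Function.ne_iff.1 h with ⟨i, hi⟩
  have hi' : ξ i ≠ 0 := hi
  fin_cases i
  · have : 0 < (ξ 0)^2 := by positivity
    nlinarith [sq_nonneg (ξ 1)]
  · have : 0 < (ξ 1)^2 := by positivity
    nlinarith [sq_nonneg (ξ 0)]

lemma deriv_lj_eq {t : ℝ} (ht : t ≠ 0) :
    deriv lj t = -12 * t ^ (-13 : ℤ) + 12 * t ^ (-7 : ℤ) := by
  have h : HasDerivAt lj ((-12 : ℝ) * t ^ (-13 : ℤ) - 2 * ((-6 : ℝ) * t ^ (-7 : ℤ))) t := by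
    have h1 := hasDerivAt_zpow (-12) t (Or.inl ht)
    have h2 := (hasDerivAt_zpow (-6) t (Or.inl ht)).const_mul (2 : ℝ)
    have := h1.sub h2
    norm_num at this ⊢
    exact this
  rw [h.deriv]; ring

lemma deriv2_lj_eq {t : ℝ} (ht : t ≠ 0) :
    deriv (deriv lj) t = 156 * t ^ (-14 : ℤ) - 84 * t ^ (-8 : ℤ) := by
  have hev : deriv lj =ᶠ[nhds t] fun x => -12 * x ^ (-13 : ℤ) + 12 * x ^ (-7 : ℤ) := by
    filter_upwards [eventually_ne_nhds ht] with x hx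
    exact deriv_lj_eq hx
  rw [hev.deriv_eq]
  have h : HasDerivAt (fun x : ℝ => -12 * x ^ (-13 : ℤ) + 12 * x ^ (-7 : ℤ))
      ((-12 : ℝ) * ((-13 : ℝ) * t ^ (-14 : ℤ)) + 12 * ((-7 : ℝ) * t ^ (-8 : ℤ))) t := by
    have h1 := (hasDerivAt_zpow (-13) t (Or.inl ht)).const_mul (-12 : ℝ)
    have h2 := (hasDerivAt_zpow (-7) t (Or.inl ht)).const_mul (12 : ℝ)
    have := h1.add h2
    norm_num at this ⊢
    exact this
  rw [h.deriv]; ring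

lemma ab_vals {t : ℝ} (ht : 0 < t) :
    deriv lj t / t = (12 * t ^ 6 - 12) / t ^ 14 ∧
      deriv (deriv lj) t = (156 - 84 * t ^ 6) / t ^ 14 := by
  have h14 : t ^ 14 ≠ 0 := pow_ne_zero _ ht.ne'
  constructor
  · rw [deriv_lj_eq ht.ne']
    rw [show (-13 : ℤ) = -(13 : ℕ) by norm_num, show (-7 : ℤ) = -(7 : ℕ) by norm_num,
      zpow_neg, zpow_neg, zpow_natCast, zpow_natCast]
    field_simp
    ring
  · rw [deriv2_lj_eq ht.ne']
    rw [show (-14 : ℤ) = -(14 : ℕ) by norm_num, show (-8 : ℤ) = -(8 : ℕ) by norm_num,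
      zpow_neg, zpow_neg, zpow_natCast, zpow_natCast]
    field_simp

lemma t_lt_iff {t : ℝ} (ht : 0 < t) :
    t < ((19 : ℝ) / 10) ^ ((1 : ℝ) / 6) ↔ 10 * t ^ 6 < 19 := by
  have hc : (((19 : ℝ) / 10) ^ ((1 : ℝ) / 6)) ^ (6 : ℕ) = 19 / 10 := by
    rw [← Real.rpow_natCast (((19 : ℝ) / 10) ^ ((1 : ℝ) / 6)) 6,
      ← Real.rpow_mul (by norm_num : (0:ℝ) ≤ 19/10)]
    norm_num
  have hcpos : (0:ℝ) < ((19 : ℝ) / 10) ^ ((1 : ℝ) / 6) :=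
    Real.rpow_pos_of_pos (by norm_num) _
  rw [← pow_lt_pow_iff_left₀ ht.le hcpos.le (by norm_num : (6:ℕ) ≠ 0), hc]
  constructor <;> intro h <;> nlinarith

set_option maxHeartbeats 2000000 in
/-- for the Lennard-Jones potential on the triangular lattice,
the uniformly dilated lattice `M(t) = tM` is stable — `λ_atom(M(t)) > 0`,
equivalently `λ̃_LH(M(t)) > 0` — if and only if `t ∈ (0, (19/10)^{1/6})`. -/
theorem lennardJones_triangular_stability (t : ℝ) :
    ((0 < t ∧ 0 < lamAtomCS (triK (deriv lj t / t) (deriv (deriv lj) t))) ↔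
      (0 < t ∧ t < ((19 : ℝ) / 10) ^ ((1 : ℝ) / 6))) ∧
    ((0 < t ∧ 0 < lamTildeLH (triK (deriv lj t / t) (deriv (deriv lj) t))) ↔
      (0 < t ∧ t < ((19 : ℝ) / 10) ^ ((1 : ℝ) / 6))) := by
  rcases le_or_gt t 0 with ht | ht
  · constructor <;>
      exact iff_of_false (fun h => absurd h.1 (not_lt.2 ht))
        (fun h => absurd h.1 (not_lt.2 ht))
  -- now 0 < t
  obtain ⟨ha, hb⟩ := ab_vals ht
  set a : ℝ := deriv lj t / t with ha'
  set b : ℝ := deriv (deriv lj) t with hb'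
  have h14 : (0:ℝ) < t ^ 14 := by positivity
  -- witnesses
  set ξw : Fin 2 → ℝ := ![0, 1] with hξw
  have hξw0 : ξw 0 = 0 := rfl
  have hξw1 : ξw 1 = 1 := rfl
  have hξwne : ξw ≠ 0 := by
    intro h
    have := congrFun h 1
    simp [hξw1] at this
  set kw : Fin 2 → ℝ := ![0, π] with hkw
  have hkw0 : kw 0 = 0 := rfl
  have hkw1 : kw 1 = π := rfl
  have hkwne : kw ≠ 0 := by
    intro h
    have := congrFun h 1
    rw [hkw1] at this
    exact Real.pi_ne_zero this
  have hkwIco : ∀ i, kw i ∈ Set.Ico 0 (2 * π) := by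
    intro i
    fin_cases i
    · exact ⟨le_refl 0, by positivity⟩
    · refine ⟨Real.pi_pos.le, ?_⟩
      show π < 2 * π
      nlinarith [Real.pi_pos]
  -- value of the witnesses
  have hwA : NN a b (2-2*Real.cos (kw 0)) (2-2*Real.cos (kw 1)) (2-2*Real.cos (kw 1 - kw 0))
        (ξw 0) (ξw 1) /
      (((ξw 0)^2+(ξw 1)^2) *
        ((2-2*Real.cos (kw 0)) + (2-2*Real.cos (kw 1)) + (2-2*Real.cos (kw 1 - kw 0))))
      = (a + 3*b)/4 := by
    rw [hξw0, hξw1, hkw0, hkw1]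
    rw [sub_zero, Real.cos_zero, Real.cos_pi]
    unfold NN
    rw [div_eq_iff (by norm_num)]
    linear_combination (2*(b-a))*sqrt3_sq
  have hwT : NN a b ((ξw 0)^2) ((ξw 1)^2) ((ξw 1 - ξw 0)^2) (ξw 0) (ξw 1) /
      (((ξw 0)^2+(ξw 1)^2) * ((ξw 0)^2 + (ξw 1)^2 + (ξw 1 - ξw 0)^2))
      = (a + 3*b)/4 := by
    rw [hξw0, hξw1]
    unfold NN
    rw [div_eq_iff (by norm_num)]
    linear_combination ((b-a)/2)*sqrt3_sq
  -- stability bounds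
  have hstab : 10 * t ^ 6 < 19 → 0 < min ((3*a+b)/4) ((a+3*b)/4) := by
    intro h6
    have e1 : (3*a+b)/4 = (30 - 12*t^6)/t^14 := by
      rw [ha, hb]; field_simp; ring
    have e2 : (a+3*b)/4 = (114 - 60*t^6)/t^14 := by
      rw [ha, hb]; field_simp; ring
    rw [lt_min_iff, e1, e2]
    constructor <;> apply div_pos (by nlinarith) h14
  have hunst : 19 ≤ 10 * t ^ 6 → (a + 3*b)/4 ≤ 0 := by
    intro h6
    have e2 : (a+3*b)/4 = (114 - 60*t^6)/t^14 := by
      rw [ha, hb]; field_simp; ring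
    rw [e2]
    exact div_nonpos_of_nonpos_of_nonneg (by nlinarith) h14.le
  -- atom part
  have hatomlow : 10 * t ^ 6 < 19 → 0 < lamAtomCS (triK a b) := by
    intro h6
    apply lt_of_lt_of_le (hstab h6)
    apply le_csInf
    · exact ⟨_, ξw, kw, hξwne, hkwne, hkwIco, rfl⟩
    · rintro r ⟨ξ, k, hξ, hk, hIco, rfl⟩
      rw [atom_elem_eq]
      have hw1 : 0 ≤ 2 - 2*Real.cos (k 0) := by nlinarith [Real.cos_le_one (k 0)]
      have hw2 : 0 ≤ 2 - 2*Real.cos (k 1) := by nlinarith [Real.cos_le_one (k 1)]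
      have hw3 : 0 ≤ 2 - 2*Real.cos (k 1 - k 0) := by nlinarith [Real.cos_le_one (k 1 - k 0)]
      have hwsum : 0 < (2-2*Real.cos (k 0)) + (2-2*Real.cos (k 1))
          + (2-2*Real.cos (k 1 - k 0)) := by
        rcases lt_or_eq_of_le hw1 with h1 | h1
        · linarith
        rcases lt_or_eq_of_le hw2 with h2 | h2
        · linarith
        exfalso
        apply hk
        have hc1 : Real.cos (k 0) = 1 := by linarith
        have hc2 : Real.cos (k 1) = 1 := by linarith
        have hk0 : k 0 = 0 := by
          have h := hIco 0
          exact (Real.cos_eq_one_iff_of_lt_of_lt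
            (by nlinarith [Real.pi_pos, h.1]) h.2).1 hc1
        have hk1 : k 1 = 0 := by
          have h := hIco 1
          exact (Real.cos_eq_one_iff_of_lt_of_lt
            (by nlinarith [Real.pi_pos, h.1]) h.2).1 hc2
        funext i
        fin_cases i
        · exact hk0
        · exact hk1
      exact ratio_min_le a b _ _ _ _ _ hw1 hw2 hw3 (heron_trig (k 0) (k 1))
        (sumsq_pos hξ) hwsum
  have hatomhigh : 19 ≤ 10 * t ^ 6 → ¬ (0 < lamAtomCS (triK a b)) := by
    intro h6
    have hbdd : BddBelow { r : ℝ | ∃ (ξ k : Fin 2 → ℝ), ξ ≠ 0 ∧ k ≠ 0 ∧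
        (∀ i, k i ∈ Set.Ico 0 (2 * π)) ∧
        r = (Qform (triK a b) ξ (fun ρ => Real.cos (ipk ρ.1 k) - 1) +
              Qform (triK a b) ξ (fun ρ => Real.sin (ipk ρ.1 k))) /
            ((∑ i, (ξ i) ^ 2) *
              ((∑ ρ : ↥triR, (Real.cos (ipk ρ.1 k) - 1) ^ 2) +
                (∑ ρ : ↥triR, (Real.sin (ipk ρ.1 k)) ^ 2))) } := by
      refine ⟨min a b, ?_⟩
      rintro r ⟨ξ, k, hξ, hk, hIco, rfl⟩
      rw [atom_elem_eq]
      have hw1 : 0 ≤ 2 - 2*Real.cos (k 0) := by nlinarith [Real.cos_le_one (k 0)]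
      have hw2 : 0 ≤ 2 - 2*Real.cos (k 1) := by nlinarith [Real.cos_le_one (k 1)]
      have hw3 : 0 ≤ 2 - 2*Real.cos (k 1 - k 0) := by nlinarith [Real.cos_le_one (k 1 - k 0)]
      have hwsum : 0 < (2-2*Real.cos (k 0)) + (2-2*Real.cos (k 1))
          + (2-2*Real.cos (k 1 - k 0)) := by
        rcases lt_or_eq_of_le hw1 with h1 | h1
        · linarith
        rcases lt_or_eq_of_le hw2 with h2 | h2
        · linarith
        exfalso
        apply hk
        have hc1 : Real.cos (k 0) = 1 := by linarith
        have hc2 : Real.cos (k 1) = 1 := by linarith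
        have hk0 : k 0 = 0 := by
          have h := hIco 0
          exact (Real.cos_eq_one_iff_of_lt_of_lt
            (by nlinarith [Real.pi_pos, h.1]) h.2).1 hc1
        have hk1 : k 1 = 0 := by
          have h := hIco 1
          exact (Real.cos_eq_one_iff_of_lt_of_lt
            (by nlinarith [Real.pi_pos, h.1]) h.2).1 hc2
        funext i
        fin_cases i
        · exact hk0
        · exact hk1
      exact ratio_lb a b _ _ _ _ _ hw1 hw2 hw3 (sumsq_pos hξ) hwsum
    have hmem : ((a + 3*b)/4) ∈ { r : ℝ | ∃ (ξ k : Fin 2 → ℝ), ξ ≠ 0 ∧ k ≠ 0 ∧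
        (∀ i, k i ∈ Set.Ico 0 (2 * π)) ∧
        r = (Qform (triK a b) ξ (fun ρ => Real.cos (ipk ρ.1 k) - 1) +
              Qform (triK a b) ξ (fun ρ => Real.sin (ipk ρ.1 k))) /
            ((∑ i, (ξ i) ^ 2) *
              ((∑ ρ : ↥triR, (Real.cos (ipk ρ.1 k) - 1) ^ 2) +
                (∑ ρ : ↥triR, (Real.sin (ipk ρ.1 k)) ^ 2))) } := by
      refine ⟨ξw, kw, hξwne, hkwne, hkwIco, ?_⟩
      rw [atom_elem_eq, hwA]
    have := csInf_le hbdd hmem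
    intro hpos
    unfold lamAtomCS at hpos
    have := hunst h6
    linarith
  -- tilde part
  have htildelow : 10 * t ^ 6 < 19 → 0 < lamTildeLH (triK a b) := by
    intro h6
    apply lt_of_lt_of_le (hstab h6)
    apply le_csInf
    · exact ⟨_, ξw, ξw, hξwne, hξwne, rfl⟩
    · rintro r ⟨ξ, η, hξ, hη, rfl⟩
      rw [tilde_elem_eq]
      have hη' := sumsq_pos hη
      have hwsum : 0 < (η 0)^2 + (η 1)^2 + (η 1 - η 0)^2 := by
        nlinarith [sq_nonneg (η 1 - η 0)]
      exact ratio_min_le a b _ _ _ _ _ (sq_nonneg _) (sq_nonneg _) (sq_nonneg _)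
        (by nlinarith [sq_nonneg (η 0), sq_nonneg (η 1), sq_nonneg (η 1 - η 0)] :
          ((η 0)^2)^2 + ((η 1)^2)^2 + ((η 1 - η 0)^2)^2 ≤
            2*((η 0)^2*(η 1)^2 + (η 1)^2*(η 1 - η 0)^2 + (η 1 - η 0)^2*(η 0)^2))
        (sumsq_pos hξ) hwsum
  have htildehigh : 19 ≤ 10 * t ^ 6 → ¬ (0 < lamTildeLH (triK a b)) := by
    intro h6
    have hbdd : BddBelow { r : ℝ | ∃ ξ η : Fin 2 → ℝ, ξ ≠ 0 ∧ η ≠ 0 ∧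
        r = Qform (triK a b) ξ (fun ρ => ipk ρ.1 η) /
            ((∑ i, (ξ i) ^ 2) * (∑ ρ : ↥triR, (ipk ρ.1 η) ^ 2)) } := by
      refine ⟨min a b, ?_⟩
      rintro r ⟨ξ, η, hξ, hη, rfl⟩
      rw [tilde_elem_eq]
      have hη' := sumsq_pos hη
      have hwsum : 0 < (η 0)^2 + (η 1)^2 + (η 1 - η 0)^2 := by
        nlinarith [sq_nonneg (η 1 - η 0)]
      exact ratio_lb a b _ _ _ _ _ (sq_nonneg _) (sq_nonneg _) (sq_nonneg _)
        (sumsq_pos hξ) hwsum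
    have hmem : ((a + 3*b)/4) ∈ { r : ℝ | ∃ ξ η : Fin 2 → ℝ, ξ ≠ 0 ∧ η ≠ 0 ∧
        r = Qform (triK a b) ξ (fun ρ => ipk ρ.1 η) /
            ((∑ i, (ξ i) ^ 2) * (∑ ρ : ↥triR, (ipk ρ.1 η) ^ 2)) } := by
      refine ⟨ξw, ξw, hξwne, hξwne, ?_⟩
      rw [tilde_elem_eq, hwT]
    have := csInf_le hbdd hmem
    intro hpos
    unfold lamTildeLH at hpos
    have := hunst h6
    linarith
  -- conclude
  have hiff := t_lt_iff ht
  constructor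
  · constructor
    · rintro ⟨ht', hpos⟩
      refine ⟨ht', ?_⟩
      rw [hiff]
      by_contra h
      exact hatomhigh (by linarith) hpos
    · rintro ⟨ht', hlt⟩
      exact ⟨ht', hatomlow (hiff.1 hlt)⟩
  · constructor
    · rintro ⟨ht', hpos⟩
      refine ⟨ht', ?_⟩
      rw [hiff]
      by_contra h
      exact htildehigh (by linarith) hpos
    · rintro ⟨ht', hlt⟩
      exact ⟨ht', htildelow (hiff.1 hlt)⟩

end
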